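/- Quantitative coverage probability (Lemma 5.2, coverage part, metric-measure form): let (M,d) be a compact metric space, m* ≥ 1, μ a Borel probability measure on M, and c₁, c₂ > 0, δ₀ > 0 constants such that for every δ ∈ (0, δ₀]: (i) μ(B(x,δ)) ≥ c₁ δ^{m*} for all x ∈ M, and (ii) M admits a δ-net of cardinality at most c₂ δ^{−m*}. Let u₁,…,uₙ be i.i.d. with law μ and V_n := {u₁,…,uₙ}. Then for every τ > 0 there exists n(τ) ∈ ℕ such that for all n ≥ n(τ), setting δ_n := ( (1+τ)·log n / (c₁ n) )^{1/m*}, one has Pr( max_{x ∈ M} d(x, V_n) > 2δ_n ) ≤ c₁ c₂ · n^{−τ}. In particular, choosing ε_n by a·ε_n^{1+ν}/8 = 2δ_n (i.e., ε_n^{1+ν} = K₁ ((1+τ) log n / n)^{1/m*} with K₁ depending only on a, c₁), assumption (H15) holds with probability at least 1 − c₁ c₂ n^{−τ}. -/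

import Mathlib

open MeasureTheory Filter

set_option maxHeartbeats 1000000

/-- **Quantitative coverage probability** (Lemma 5.2, coverage part,
metric-measure form): if `μ(B(x,δ)) ≥ c₁δ^{m*}` for all `x` and small `δ`, and `M`
admits `δ`-nets of cardinality at most `c₂δ^{−m*}`, then for every `τ > 0` there is
`n(τ)` such that for all `n ≥ n(τ)`, with
`δ_n = ((1+τ) log n / (c₁ n))^{1/m*}`, the probability that `n` i.i.d. samples fail
to be a `2δ_n`-cover of `M` is at most `c₁c₂ n^{−τ}`. In particular, for `ε_n`
defined by `a ε_n^{1+ν}/8 = 2δ_n`, assumption (H15) holds with probability at least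
`1 − c₁c₂ n^{−τ}`. -/
theorem quantitative_coverage_probability
    {M : Type*} [MetricSpace M] [CompactSpace M]
    [MeasurableSpace M] [BorelSpace M]
    (μ : Measure M) [IsProbabilityMeasure μ]
    (mstar : ℕ) (hm : 1 ≤ mstar)
    (c₁ c₂ δ₀ : ℝ) (hc₁ : 0 < c₁) (hc₂ : 0 < c₂) (hδ₀ : 0 < δ₀)
    -- (i) small balls have measure at least `c₁ δ^{m*}`
    (hball : ∀ δ : ℝ, 0 < δ → δ ≤ δ₀ → ∀ x : M,
      ENNReal.ofReal (c₁ * δ ^ mstar) ≤ μ (Metric.closedBall x δ))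
    -- (ii) `M` admits `δ`-nets of cardinality at most `c₂ δ^{−m*}`
    (hnet : ∀ δ : ℝ, 0 < δ → δ ≤ δ₀ → ∃ S : Finset M,
      (S.card : ℝ) ≤ c₂ * δ ^ (-(mstar : ℝ)) ∧ ∀ x : M, ∃ j ∈ S, dist x j ≤ δ)
    (a ν : ℝ) (ha : 0 < a) (hν : 0 < ν) :
    ∀ τ : ℝ, 0 < τ → ∃ N₀ : ℕ, ∀ n : ℕ, N₀ ≤ n →
      (Measure.pi (fun _ : Fin n => μ)
          {u : Fin n → M | ∃ x : M, ∀ i,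
            2 * ((1 + τ) * Real.log n / (c₁ * n)) ^ ((mstar : ℝ)⁻¹) < dist x (u i)}
        ≤ ENNReal.ofReal (c₁ * c₂ * (n : ℝ) ^ (-τ))) ∧
      -- in particular, (H15) with `M̃ = V_n` holds with probability at least
      -- `1 − c₁c₂ n^{−τ}` for `ε_n` defined by `a ε_n^{1+ν}/8 = 2δ_n`
      (∀ εn : ℝ,
        a * εn ^ (1 + ν) / 8
            = 2 * ((1 + τ) * Real.log n / (c₁ * n)) ^ ((mstar : ℝ)⁻¹) →
        1 - ENNReal.ofReal (c₁ * c₂ * (n : ℝ) ^ (-τ)) ≤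
          Measure.pi (fun _ : Fin n => μ)
            {u : Fin n → M | ∀ x : M, ∃ i, dist x (u i) ≤ a * εn ^ (1 + ν) / 8}) := by
  intro τ hτ
  have h1τ : (0:ℝ) < 1 + τ := by linarith
  have hmR : ((mstar : ℝ)) ≠ 0 := Nat.cast_ne_zero.mpr (by omega)
  have htend : Tendsto (fun n : ℕ => (1 + τ) * Real.log n / (c₁ * n)) atTop (nhds 0) := by
    have h := Real.tendsto_pow_log_div_mul_add_atTop 1 0 1 one_ne_zero
    simp only [pow_one, one_mul, add_zero] at h
    have h2 := h.comp (tendsto_natCast_atTop_atTop (R := ℝ))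
    have h3 := h2.const_mul ((1 + τ) / c₁)
    rw [mul_zero] at h3
    refine h3.congr fun n => ?_
    simp only [Function.comp]
    field_simp
  obtain ⟨N₁, hN₁⟩ := eventually_atTop.mp
    (htend.eventually_lt_const (by positivity : (0:ℝ) < δ₀ ^ mstar))
  refine ⟨max N₁ 3, fun n hn => ?_⟩
  have hn3 : 3 ≤ n := le_trans (le_max_right _ _) hn
  have hnpos : (0:ℝ) < n := by exact_mod_cast (by omega : 0 < n)
  have hlogn : 1 ≤ Real.log n := by
    rw [Real.le_log_iff_exp_le hnpos]
    calc Real.exp 1 ≤ 3 := by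
          have := Real.exp_one_lt_d9; linarith
      _ ≤ (n:ℝ) := by exact_mod_cast hn3
  set L : ℝ := (1 + τ) * Real.log n / (c₁ * n) with hLdef
  have hLpos : 0 < L := div_pos (by nlinarith) (by positivity)
  set δ : ℝ := L ^ ((mstar : ℝ)⁻¹) with hδdef
  have hδpos : 0 < δ := Real.rpow_pos_of_pos hLpos _
  have hδm : δ ^ mstar = L := by
    rw [hδdef, ← Real.rpow_natCast (L ^ ((mstar : ℝ)⁻¹)) mstar, ← Real.rpow_mul hLpos.le,
      inv_mul_cancel₀ hmR, Real.rpow_one]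
  have hLδ₀ : L ≤ δ₀ ^ mstar := (hN₁ n (le_trans (le_max_left _ _) hn)).le
  have hδδ₀ : δ ≤ δ₀ := by
    have h1 : δ ^ mstar ≤ δ₀ ^ mstar := by rw [hδm]; exact hLδ₀
    exact le_of_pow_le_pow_left₀ (by omega) hδ₀.le h1
  have hMne : Nonempty M := by
    by_contra h
    have he : (Set.univ : Set M) = ∅ := Set.univ_eq_empty_iff.mpr (not_nonempty_iff.mp h)
    have h1 : μ Set.univ = 1 := measure_univ
    rw [he, measure_empty] at h1
    exact zero_ne_one h1
  obtain ⟨x₀⟩ := hMne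
  have hc₁L : c₁ * L ≤ 1 := by
    have h1 := hball δ hδpos hδδ₀ x₀
    rw [hδm] at h1
    exact ENNReal.ofReal_le_one.mp (le_trans h1 prob_le_one)
  obtain ⟨S, hScard, hScover⟩ := hnet δ hδpos hδδ₀
  have hδneg : δ ^ (-(mstar : ℝ)) = L⁻¹ := by
    rw [Real.rpow_neg hδpos.le, Real.rpow_natCast, hδm]
  rw [hδneg] at hScard
  set E : Set (Fin n → M) := {u : Fin n → M | ∃ x : M, ∀ i, 2 * δ < dist x (u i)} with hEdef
  have hsub : E ⊆ ⋃ j ∈ S, {u : Fin n → M | ∀ i, u i ∈ (Metric.closedBall j δ)ᶜ} := by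
    rintro u ⟨x, hx⟩
    obtain ⟨j, hjS, hj⟩ := hScover x
    refine Set.mem_biUnion hjS fun i => ?_
    simp only [Set.mem_compl_iff, Metric.mem_closedBall, not_le]
    have h1 := hx i
    have h2 : dist x (u i) ≤ dist x j + dist j (u i) := dist_triangle _ _ _
    rw [dist_comm (u i) j]
    linarith
  have hkey : ∀ j : M, Measure.pi (fun _ : Fin n => μ)
      {u : Fin n → M | ∀ i, u i ∈ (Metric.closedBall j δ)ᶜ}
      ≤ ENNReal.ofReal ((n:ℝ) ^ (-(1 + τ))) := by
    intro j
    have heq : {u : Fin n → M | ∀ i, u i ∈ (Metric.closedBall j δ)ᶜ}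
        = Set.pi Set.univ (fun _ : Fin n => (Metric.closedBall j δ)ᶜ) := by
      ext u; simp [Set.mem_pi]
    rw [heq, Measure.pi_pi, Finset.prod_const, Finset.card_univ, Fintype.card_fin]
    have hc : μ (Metric.closedBall j δ)ᶜ ≤ ENNReal.ofReal (1 - c₁ * L) := by
      rw [measure_compl measurableSet_closedBall (measure_ne_top μ _), measure_univ]
      calc 1 - μ (Metric.closedBall j δ)
          ≤ 1 - ENNReal.ofReal (c₁ * L) := by
            apply tsub_le_tsub_left
            have h1 := hball δ hδpos hδδ₀ j
            rwa [hδm] at h1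
        _ = ENNReal.ofReal (1 - c₁ * L) := by
            rw [ENNReal.ofReal_sub _ (by positivity : (0:ℝ) ≤ c₁ * L), ENNReal.ofReal_one]
    calc μ (Metric.closedBall j δ)ᶜ ^ n ≤ ENNReal.ofReal (1 - c₁ * L) ^ n :=
          pow_le_pow_left' hc n
      _ = ENNReal.ofReal ((1 - c₁ * L) ^ n) := (ENNReal.ofReal_pow (by linarith) n).symm
      _ ≤ ENNReal.ofReal ((n:ℝ) ^ (-(1 + τ))) := by
          apply ENNReal.ofReal_le_ofReal
          have h1 : (1 - c₁ * L) ^ n ≤ Real.exp (-(c₁ * L)) ^ n := by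
            apply pow_le_pow_left₀ (by linarith)
            linarith [Real.add_one_le_exp (-(c₁ * L))]
          have h2 : Real.exp (-(c₁ * L)) ^ n = Real.exp ((n:ℝ) * -(c₁ * L)) := by
            rw [← Real.exp_nat_mul]
          have h3 : (n:ℝ) * (c₁ * L) = (1 + τ) * Real.log n := by
            rw [hLdef]; field_simp
          rw [Real.rpow_def_of_pos hnpos]
          rw [h2] at h1
          calc (1 - c₁ * L) ^ n ≤ Real.exp ((n:ℝ) * -(c₁ * L)) := h1
            _ = Real.exp (Real.log n * -(1 + τ)) := by
                congr 1
                rw [show (n:ℝ) * -(c₁ * L) = -((n:ℝ) * (c₁ * L)) by ring, h3]; ring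
  have hmain : Measure.pi (fun _ : Fin n => μ) E ≤ ENNReal.ofReal (c₁ * c₂ * (n : ℝ) ^ (-τ)) := by
    calc Measure.pi (fun _ : Fin n => μ) E
        ≤ Measure.pi (fun _ : Fin n => μ)
            (⋃ j ∈ S, {u : Fin n → M | ∀ i, u i ∈ (Metric.closedBall j δ)ᶜ}) :=
          measure_mono hsub
      _ ≤ ∑ j ∈ S, Measure.pi (fun _ : Fin n => μ)
            {u : Fin n → M | ∀ i, u i ∈ (Metric.closedBall j δ)ᶜ} :=
          measure_biUnion_finset_le _ _
      _ ≤ ∑ _j ∈ S, ENNReal.ofReal ((n:ℝ) ^ (-(1 + τ))) :=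
          Finset.sum_le_sum fun j _ => hkey j
      _ = (S.card : ENNReal) * ENNReal.ofReal ((n:ℝ) ^ (-(1 + τ))) := by
          rw [Finset.sum_const, nsmul_eq_mul]
      _ = ENNReal.ofReal ((S.card : ℝ) * (n:ℝ) ^ (-(1 + τ))) := by
          rw [ENNReal.ofReal_mul (by positivity), ENNReal.ofReal_natCast]
      _ ≤ ENNReal.ofReal (c₁ * c₂ * (n : ℝ) ^ (-τ)) := by
          apply ENNReal.ofReal_le_ofReal
          have hnr : (0:ℝ) ≤ (n:ℝ) ^ (-(1 + τ)) := (Real.rpow_pos_of_pos hnpos _).le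
          have hLinv : L⁻¹ ≤ c₁ * n := by
            rw [hLdef, inv_div]
            exact div_le_self (by positivity) (by nlinarith)
          calc (S.card : ℝ) * (n:ℝ) ^ (-(1 + τ))
              ≤ (c₂ * L⁻¹) * (n:ℝ) ^ (-(1 + τ)) := mul_le_mul_of_nonneg_right hScard hnr
            _ ≤ (c₂ * (c₁ * n)) * (n:ℝ) ^ (-(1 + τ)) :=
                mul_le_mul_of_nonneg_right
                  (mul_le_mul_of_nonneg_left hLinv hc₂.le) hnr
            _ = c₁ * c₂ * ((n:ℝ) * (n:ℝ) ^ (-(1 + τ))) := by ring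
            _ = c₁ * c₂ * (n : ℝ) ^ (-τ) := by
                congr 1
                nth_rewrite 1 [← Real.rpow_one (n:ℝ)]
                rw [← Real.rpow_add hnpos]
                norm_num
  refine ⟨hmain, ?_⟩
  intro εn hε
  rw [hε]
  have hco : {u : Fin n → M | ∀ x : M, ∃ i, dist x (u i) ≤ 2 * δ} = Eᶜ := by
    ext u
    simp only [hEdef, Set.mem_compl_iff, Set.mem_setOf_eq]
    push_neg
    rfl
  rw [hco]
  have h1 : (1:ENNReal) ≤ Measure.pi (fun _ : Fin n => μ) E
      + Measure.pi (fun _ : Fin n => μ) Eᶜ := by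
    calc (1:ENNReal) = Measure.pi (fun _ : Fin n => μ) Set.univ := measure_univ.symm
      _ = Measure.pi (fun _ : Fin n => μ) (E ∪ Eᶜ) := by rw [Set.union_compl_self]
      _ ≤ _ := measure_union_le _ _
  rw [tsub_le_iff_right]
  calc (1:ENNReal) ≤ Measure.pi (fun _ : Fin n => μ) E
        + Measure.pi (fun _ : Fin n => μ) Eᶜ := h1
    _ ≤ ENNReal.ofReal (c₁ * c₂ * (n : ℝ) ^ (-τ))
        + Measure.pi (fun _ : Fin n => μ) Eᶜ := add_le_add_left hmain _
    _ = Measure.pi (fun _ : Fin n => μ) Eᶜ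
        + ENNReal.ofReal (c₁ * c₂ * (n : ℝ) ^ (-τ)) := add_comm _ _
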